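/- Let λ > 0, h > 0 and 0 ≤ r ≤ h. Let Y be a square-integrable centered real random variable with E|Y|² ≤ 1/(2λ), and let G be a centered Gaussian random variable with variance r, independent of Y. Define β := -(λ/(1+λh)) (Y + G) and Z := (1 - λr/(1+λh)) (Y + G). Then: (i) E|β|² ≤ 2λ; (ii) E|Z|² ≤ 1/(2λ) + h; (iii) |E(β Z)| ≤ 1. -/

import Mathlib

open MeasureTheory ProbabilityTheory Real Set Filter
open scoped NNReal ENNReal

lemma aux_tendsto {b : ℝ} (hb : 0 < b) :
    Tendsto (fun x : ℝ => x * rexp (-b * x ^ 2)) atTop (nhds 0) := by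
  have h1 : Tendsto (fun x : ℝ => (b * x)⁻¹) atTop (nhds 0) :=
    Tendsto.inv_tendsto_atTop (Tendsto.const_mul_atTop hb tendsto_id)
  have hsq : Tendsto (fun x : ℝ => b * x ^ 2) atTop atTop :=
    Tendsto.const_mul_atTop hb (tendsto_pow_atTop two_ne_zero)
  have h2 : Tendsto (fun x : ℝ => (b * x ^ 2) ^ 1 * rexp (-(b * x ^ 2))) atTop (nhds 0) :=
    (tendsto_pow_mul_exp_neg_atTop_nhds_zero 1).comp hsq
  have h3 := h1.mul h2
  rw [zero_mul] at h3
  refine Tendsto.congr' ?_ h3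
  filter_upwards [Filter.Ioi_mem_atTop (0:ℝ)] with x hx
  have hx0 : (x:ℝ) ≠ 0 := ne_of_gt hx
  rw [pow_one, neg_mul]
  field_simp

lemma aux_Ioi {b : ℝ} (hb : 0 < b) :
    ∫ x in Ioi (0:ℝ), x ^ 2 * rexp (-b * x ^ 2) = (2 * b)⁻¹ * (√(π / b) / 2) := by
  have hb' : b ≠ 0 := ne_of_gt hb
  have hInt2 : Integrable (fun x : ℝ => x ^ 2 * rexp (-b * x ^ 2)) := by
    have := integrable_rpow_mul_exp_neg_mul_sq hb (s := 2) (by norm_num)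
    simpa [rpow_two] using this
  have hInt0 : Integrable (fun x : ℝ => rexp (-b * x ^ 2)) := integrable_exp_neg_mul_sq hb
  have hderiv : ∀ x ∈ Ici (0:ℝ), HasDerivAt (fun x : ℝ => -(2 * b)⁻¹ * (x * rexp (-b * x ^ 2)))
      (x ^ 2 * rexp (-b * x ^ 2) - (2 * b)⁻¹ * rexp (-b * x ^ 2)) x := by
    intro x _
    have := (((hasDerivAt_id x).mul (((hasDerivAt_pow 2 x).const_mul (-b)).exp)).const_mul
      (-(2 * b)⁻¹))
    refine this.congr_deriv ?_
    simp only [id]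
    field_simp
    ring
  have htend : Tendsto (fun x : ℝ => -(2 * b)⁻¹ * (x * rexp (-b * x ^ 2))) atTop (nhds 0) := by
    simpa using (aux_tendsto hb).const_mul (-(2 * b)⁻¹)
  have key := integral_Ioi_of_hasDerivAt_of_tendsto' hderiv
    ((hInt2.sub (hInt0.const_mul _)).integrableOn) htend
  simp only [zero_mul, mul_zero, sub_zero, neg_zero] at key
  -- key : ∫ x in Ioi 0, (x^2 * e - (2b)⁻¹ * e) = 0 - (-(2b)⁻¹ * (0 * e)) = 0
  have hsplit : ∫ x in Ioi (0:ℝ), (x ^ 2 * rexp (-b * x ^ 2) - (2 * b)⁻¹ * rexp (-b * x ^ 2))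
      = (∫ x in Ioi (0:ℝ), x ^ 2 * rexp (-b * x ^ 2))
        - (2 * b)⁻¹ * ∫ x in Ioi (0:ℝ), rexp (-b * x ^ 2) := by
    rw [integral_sub hInt2.integrableOn (hInt0.const_mul _).integrableOn, integral_const_mul]
  rw [hsplit] at key
  have hgauss : ∫ x in Ioi (0:ℝ), rexp (-b * x ^ 2) = √(π / b) / 2 := integral_gaussian_Ioi b
  rw [hgauss] at key
  linarith [key]

lemma aux_R {b : ℝ} (hb : 0 < b) :
    ∫ x : ℝ, x ^ 2 * rexp (-b * x ^ 2) = (2 * b)⁻¹ * √(π / b) := by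
  have hInt2 : Integrable (fun x : ℝ => x ^ 2 * rexp (-b * x ^ 2)) := by
    have := integrable_rpow_mul_exp_neg_mul_sq hb (s := 2) (by norm_num)
    simpa [rpow_two] using this
  have hIic : ∫ x in Iic (0:ℝ), x ^ 2 * rexp (-b * x ^ 2)
      = ∫ x in Ioi (0:ℝ), x ^ 2 * rexp (-b * x ^ 2) := by
    rw [← neg_zero (G := ℝ), ← integral_comp_neg_Ioi]
    simp [neg_sq]
  have := intervalIntegral.integral_Iic_add_Ioi (b := (0:ℝ))
    hInt2.integrableOn hInt2.integrableOn
  rw [hIic] at this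
  rw [← this, aux_Ioi hb]
  ring
lemma gauss_transfer (v : ℝ≥0) (hv : v ≠ 0) (g : ℝ → ℝ) :
    (Integrable g (gaussianReal 0 v) ↔
      Integrable (fun x => gaussianPDFReal 0 v x * g x) volume) ∧
    ∫ x, g x ∂(gaussianReal 0 v) = ∫ x, gaussianPDFReal 0 v x * g x := by
  have hfm : Measurable (fun x => (gaussianPDFReal 0 v x).toNNReal) :=
    (measurable_gaussianPDFReal 0 v).real_toNNReal
  have hcoe : ∀ x : ℝ, ((gaussianPDFReal 0 v x).toNNReal : ℝ) = gaussianPDFReal 0 v x :=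
    fun x => Real.coe_toNNReal _ (gaussianPDFReal_nonneg 0 v x)
  have hd : gaussianReal 0 v
      = volume.withDensity (fun x => ((gaussianPDFReal 0 v x).toNNReal : ℝ≥0∞)) := by
    rw [gaussianReal_of_var_ne_zero 0 hv]
    rfl
  constructor
  · rw [hd, integrable_withDensity_iff_integrable_smul hfm]
    refine integrable_congr (ae_of_all _ fun x => ?_)
    simp [NNReal.smul_def, hcoe x]
  · rw [hd, integral_withDensity_eq_integral_smul hfm]
    refine integral_congr_ae (ae_of_all _ fun x => ?_)
    simp [NNReal.smul_def, hcoe x]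

lemma gauss_moments (v : ℝ≥0) :
    Integrable (fun x : ℝ => x) (gaussianReal 0 v) ∧
    Integrable (fun x : ℝ => x ^ 2) (gaussianReal 0 v) ∧
    (∫ x, x ∂(gaussianReal 0 v)) = 0 ∧
    (∫ x, x ^ 2 ∂(gaussianReal 0 v)) = (v : ℝ) := by
  rcases eq_or_ne v 0 with hv | hv
  · subst hv
    rw [gaussianReal_zero_var]
    have hae : ∀ f : ℝ → ℝ, f =ᵐ[Measure.dirac (0:ℝ)] fun _ => f 0 := by
      intro f
      rw [MeasureTheory.ae_dirac_eq]
      exact Filter.eventually_pure.mpr rfl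
    refine ⟨?_, ?_, ?_, ?_⟩
    · exact (integrable_const ((0:ℝ))).congr (hae (fun x => x)).symm
    · exact (integrable_const ((0:ℝ)^2)).congr (hae (fun x => x ^ 2)).symm
    · simp [integral_dirac]
    · simp [integral_dirac]
  · have hvpos : (0:ℝ) < (v:ℝ) := by positivity
    set b : ℝ := (2 * (v:ℝ))⁻¹ with hbdef
    have hb : 0 < b := by positivity
    set C : ℝ := (√(2 * π * (v:ℝ)))⁻¹ with hCdef
    have hpdf : ∀ x : ℝ, gaussianPDFReal 0 v x = C * rexp (-b * x ^ 2) := by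
      intro x
      rw [gaussianPDFReal]
      congr 2
      rw [hbdef]
      field_simp
      ring
    have hInt1 : Integrable (fun x : ℝ => gaussianPDFReal 0 v x * x) volume := by
      refine ((integrable_mul_exp_neg_mul_sq hb).const_mul C).congr
        (ae_of_all _ fun x => ?_)
      simp only [hpdf]; ring
    have hInt2 : Integrable (fun x : ℝ => gaussianPDFReal 0 v x * x ^ 2) volume := by
      have h2 : Integrable (fun x : ℝ => x ^ 2 * rexp (-b * x ^ 2)) := by
        have := integrable_rpow_mul_exp_neg_mul_sq hb (s := 2) (by norm_num)
        simpa [rpow_two] using this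
      refine (h2.const_mul C).congr (ae_of_all _ fun x => ?_)
      simp only [hpdf]; ring
    have hodd : ∫ x : ℝ, x * rexp (-b * x ^ 2) = 0 := by
      have hneg := integral_neg_eq_self (fun x : ℝ => x * rexp (-b * x ^ 2)) volume
      simp only [neg_sq, neg_mul, integral_neg] at hneg
      have hcg : ∫ x : ℝ, x * rexp (-b * x ^ 2) = ∫ x : ℝ, x * rexp (-(b * x ^ 2)) := by
        simp only [neg_mul]
      rw [hcg]
      linarith
    refine ⟨((gauss_transfer v hv _).1).mpr hInt1, ((gauss_transfer v hv _).1).mpr hInt2, ?_, ?_⟩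
    · rw [(gauss_transfer v hv _).2]
      calc ∫ x : ℝ, gaussianPDFReal 0 v x * x
          = ∫ x : ℝ, C * (x * rexp (-b * x ^ 2)) := by
            refine integral_congr_ae (ae_of_all _ fun x => ?_); simp only [hpdf]; ring
        _ = C * ∫ x : ℝ, x * rexp (-b * x ^ 2) := integral_const_mul _ _
        _ = 0 := by rw [hodd, mul_zero]
    · rw [(gauss_transfer v hv _).2]
      have hR : ∫ x : ℝ, x ^ 2 * rexp (-b * x ^ 2) = (2 * b)⁻¹ * √(π / b) := aux_R hb
      calc ∫ x : ℝ, gaussianPDFReal 0 v x * x ^ 2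
          = ∫ x : ℝ, C * (x ^ 2 * rexp (-b * x ^ 2)) := by
            refine integral_congr_ae (ae_of_all _ fun x => ?_); simp only [hpdf]; ring
        _ = C * ((2 * b)⁻¹ * √(π / b)) := by rw [integral_const_mul, hR]
        _ = (v : ℝ) := by
            have h1 : (2 * b)⁻¹ = (v : ℝ) := by rw [hbdef]; field_simp
            have h2 : π / b = 2 * π * (v:ℝ) := by rw [hbdef]; field_simp
            have h3 : (0:ℝ) < √(2 * π * (v:ℝ)) := sqrt_pos.mpr (by positivity)
            rw [h1, h2, hCdef]
            field_simp

/-- Moment bounds for the drift `β` and the interpolation `Z` of the implicit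
Euler scheme for the Ornstein–Uhlenbeck process (Lemma 3.5, abstract form). -/
theorem stmt_4 {Ω : Type*} [MeasurableSpace Ω] (P : Measure Ω) [IsProbabilityMeasure P]
    (lam h r : ℝ) (hlam : 0 < lam) (hh : 0 < h) (hr0 : 0 ≤ r) (hrh : r ≤ h)
    (Y G : Ω → ℝ)
    (hY2 : MemLp Y 2 P) (hYmean : ∫ ω, Y ω ∂P = 0)
    (hYvar : ∫ ω, (Y ω) ^ 2 ∂P ≤ 1 / (2 * lam))
    (hG : Measure.map G P = gaussianReal 0 r.toNNReal)
    (hindep : IndepFun Y G P) :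
    (∫ ω, (-(lam / (1 + lam * h)) * (Y ω + G ω)) ^ 2 ∂P ≤ 2 * lam) ∧
    (∫ ω, ((1 - lam * r / (1 + lam * h)) * (Y ω + G ω)) ^ 2 ∂P ≤ 1 / (2 * lam) + h) ∧
    |∫ ω, (-(lam / (1 + lam * h)) * (Y ω + G ω)) *
        ((1 - lam * r / (1 + lam * h)) * (Y ω + G ω)) ∂P| ≤ 1 := by
  have hvr : ((r.toNNReal : ℝ≥0) : ℝ) = r := Real.coe_toNNReal r hr0
  obtain ⟨gi1, gi2, gm1, gm2⟩ := gauss_moments r.toNNReal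
  rw [← hG] at gi1 gi2 gm1 gm2
  have hne : NeZero (Measure.map G P) := by
    rw [hG]; infer_instance
  have hGae : AEMeasurable G P := aemeasurable_of_map_neZero hne
  have hGint : Integrable G P := by
    simpa [Function.comp_def] using (integrable_map_measure gi1.aestronglyMeasurable hGae).mp gi1
  have hGsq_int : Integrable (fun ω => G ω ^ 2) P := by
    simpa [Function.comp_def] using (integrable_map_measure gi2.aestronglyMeasurable hGae).mp gi2
  have hGmean : ∫ ω, G ω ∂P = 0 := by
    rw [← integral_map hGae gi1.aestronglyMeasurable]; exact gm1
  have hGvar : ∫ ω, G ω ^ 2 ∂P = r := by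
    rw [← integral_map hGae gi2.aestronglyMeasurable]; rw [gm2]; exact hvr
  have hYint : Integrable Y P := hY2.integrable one_le_two
  have hYsq : Integrable (fun ω => Y ω ^ 2) P := hY2.integrable_sq
  have hYG : Integrable (fun ω => Y ω * G ω) P := hindep.integrable_mul hYint hGint
  have hcross : ∫ ω, Y ω * G ω ∂P = 0 := by
    have := hindep.integral_mul_eq_mul_integral hYint.aestronglyMeasurable hGint.aestronglyMeasurable
    rw [show (∫ ω, Y ω * G ω ∂P) = ∫ ω, (Y * G) ω ∂P from rfl, this, hYmean, zero_mul]
  have hS : ∫ ω, (Y ω + G ω) ^ 2 ∂P = (∫ ω, Y ω ^ 2 ∂P) + r := by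
    have hexp : ∀ ω, (Y ω + G ω) ^ 2 = (Y ω ^ 2 + 2 * (Y ω * G ω)) + G ω ^ 2 := fun ω => by ring
    have hInt12 : Integrable (fun ω => Y ω ^ 2 + 2 * (Y ω * G ω)) P :=
      hYsq.add (hYG.const_mul 2)
    rw [integral_congr_ae (ae_of_all _ hexp),
      integral_add hInt12 hGsq_int,
      integral_add hYsq (hYG.const_mul 2), integral_const_mul, hcross, hGvar]
    ring
  set I := ∫ ω, (Y ω + G ω) ^ 2 ∂P with hIdef
  have hIub : I ≤ 1 / (2 * lam) + h := by rw [hS]; linarith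
  have hI0 : 0 ≤ I := integral_nonneg fun ω => sq_nonneg _
  have hd : (0:ℝ) < 1 + lam * h := by positivity
  set c1 : ℝ := lam / (1 + lam * h) with hc1def
  set c2 : ℝ := 1 - lam * r / (1 + lam * h) with hc2def
  have hc1pos : 0 < c1 := by positivity
  have hc2a : 0 ≤ c2 := by
    rw [hc2def, sub_nonneg, div_le_one hd]
    nlinarith
  have hc2b : c2 ≤ 1 := by
    rw [hc2def]
    have : 0 ≤ lam * r / (1 + lam * h) := by positivity
    linarith
  have e1 : ∫ ω, (-c1 * (Y ω + G ω)) ^ 2 ∂P = c1 ^ 2 * I := by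
    rw [hIdef, ← integral_const_mul]
    exact integral_congr_ae (ae_of_all _ fun ω => by ring)
  have e2 : ∫ ω, (c2 * (Y ω + G ω)) ^ 2 ∂P = c2 ^ 2 * I := by
    rw [hIdef, ← integral_const_mul]
    exact integral_congr_ae (ae_of_all _ fun ω => by ring)
  have e3 : ∫ ω, (-c1 * (Y ω + G ω)) * (c2 * (Y ω + G ω)) ∂P = -(c1 * c2) * I := by
    rw [hIdef, ← integral_const_mul]
    exact integral_congr_ae (ae_of_all _ fun ω => by ring)
  have h2l : lam * (1 / (2 * lam)) = 1 / 2 := by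
    field_simp
  have hc1boundstep : c1 * (1 / (2 * lam) + h) ≤ 1 := by
    rw [hc1def, div_mul_eq_mul_div, div_le_one hd]
    nlinarith
  refine ⟨?_, ?_, ?_⟩
  · rw [e1]
    have step : c1 ^ 2 * I ≤ c1 ^ 2 * (1 / (2 * lam) + h) :=
      mul_le_mul_of_nonneg_left hIub (sq_nonneg _)
    have step2 : c1 ^ 2 * (1 / (2 * lam) + h) = c1 * (c1 * (1 / (2 * lam) + h)) := by ring
    have hc1le : c1 ≤ lam := by
      rw [hc1def, div_le_iff₀ hd]
      nlinarith [mul_pos (mul_pos hlam hlam) hh]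
    have step3 : c1 * (c1 * (1 / (2 * lam) + h)) ≤ lam * 1 := by
      apply mul_le_mul hc1le hc1boundstep (by positivity) hlam.le
    linarith
  · rw [e2]
    have hc2sq : c2 ^ 2 ≤ 1 := by nlinarith
    have hub : 0 ≤ 1 / (2 * lam) + h := by positivity
    calc c2 ^ 2 * I ≤ 1 * (1 / (2 * lam) + h) := by
          apply mul_le_mul hc2sq hIub hI0 zero_le_one
      _ = 1 / (2 * lam) + h := one_mul _
  · rw [e3, abs_mul, abs_neg, abs_of_nonneg (mul_nonneg hc1pos.le hc2a),
      abs_of_nonneg hI0]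
    calc c1 * c2 * I ≤ (c1 * 1) * (1 / (2 * lam) + h) := by
          apply mul_le_mul _ hIub hI0 (by positivity)
          exact mul_le_mul_of_nonneg_left hc2b hc1pos.le
      _ = c1 * (1 / (2 * lam) + h) := by ring
      _ ≤ 1 := hc1boundstep
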